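/- The cycle C₆ is embeddable in its complement, and for every embedding σ of C₆, the graph C₆ ⊕ σ(C₆) is a 4-regular graph on 6 vertices whose complement is a perfect matching; hence any two such graphs are isomorphic and C₆ is uniquely embeddable. -/

import Mathlib

open SimpleGraph

/-- The cycle graph on `ZMod n`: `i` and `j` adjacent iff they differ by one. -/
def CycGraph (n : ℕ) : SimpleGraph (ZMod n) where
  Adj i j := i ≠ j ∧ (i = j + 1 ∨ j = i + 1)
  symm := by refine ⟨?_⟩; rintro i j ⟨hne, h⟩; exact ⟨hne.symm, h.symm⟩
  loopless := by refine ⟨?_⟩; rintro i ⟨hne, _⟩; exact hne rfl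

/-- `σ` is an embedding of `G` into its complement. -/
def IsGraphEmbedding {V : Type*} (G : SimpleGraph V) (σ : Equiv.Perm V) : Prop :=
  ∀ x y, G.Adj x y → ¬ G.Adj (σ x) (σ y)

/-- The edge sum `G ⊕ σ(G)`. -/
def EdgeSum {V : Type*} (G : SimpleGraph V) (σ : Equiv.Perm V) : SimpleGraph V :=
  G ⊔ G.map σ.toEmbedding

/-- Vertex-disjoint union of two graphs. -/
def DisjUnion {α β : Type*} (G : SimpleGraph α) (H : SimpleGraph β) :
    SimpleGraph (α ⊕ β) where
  Adj x y :=
    (∃ a b, x = Sum.inl a ∧ y = Sum.inl b ∧ G.Adj a b) ∨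
    (∃ a b, x = Sum.inr a ∧ y = Sum.inr b ∧ H.Adj a b)
  symm := by
    refine ⟨?_⟩
    rintro x y (⟨a, b, rfl, rfl, h⟩ | ⟨a, b, rfl, rfl, h⟩)
    · exact Or.inl ⟨b, a, rfl, rfl, h.symm⟩
    · exact Or.inr ⟨b, a, rfl, rfl, h.symm⟩
  loopless := by
    refine ⟨?_⟩
    rintro x (⟨a, b, rfl, h, hadj⟩ | ⟨a, b, rfl, h, hadj⟩) <;>
      · cases h; exact hadj.ne rfl

instance : DecidableRel (CycGraph 6).Adj :=
  fun i j => decidable_of_iff (i ≠ j ∧ (i = j + 1 ∨ j = i + 1)) Iff.rfl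

def A (σ : Equiv.Perm (ZMod 6)) (v w : ZMod 6) : Prop :=
  (CycGraph 6).Adj v w ∨ (CycGraph 6).Adj (σ.symm v) (σ.symm w)

instance : ∀ σ, DecidableRel (A σ) := fun _ _ _ => instDecidableOr

instance : ∀ σ : Equiv.Perm (ZMod 6), Decidable (IsGraphEmbedding (CycGraph 6) σ) :=
  fun σ => decidable_of_iff (∀ x y, (CycGraph 6).Adj x y → ¬ (CycGraph 6).Adj (σ x) (σ y)) Iff.rfl

lemma edgeSum_adj (σ : Equiv.Perm (ZMod 6)) (x y : ZMod 6) :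
    (EdgeSum (CycGraph 6) σ).Adj x y ↔ A σ x y := by
  simp only [EdgeSum, SimpleGraph.sup_adj, SimpleGraph.map_adj, A]
  constructor
  · rintro (h | ⟨a, b, h, rfl, rfl⟩)
    · exact Or.inl h
    · exact Or.inr (by simpa using h)
  · rintro (h | h)
    · exact Or.inl h
    · exact Or.inr ⟨σ.symm x, σ.symm y, h, by simp, by simp⟩

set_option maxHeartbeats 4000000 in
set_option maxRecDepth 10000 in
lemma keyB : ∀ σ : Equiv.Perm (ZMod 6), IsGraphEmbedding (CycGraph 6) σ →
    (∀ v, (Finset.univ.filter (fun w => A σ v w)).card = 4) ∧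
    (∀ v, ∃ w, ((v ≠ w ∧ ¬ A σ v w) ∧ ∀ y, (v ≠ y ∧ ¬ A σ v y) → y = w)) := by decide

def f0 : ZMod 6 → ZMod 6 := fun x =>
  if x = 1 then 2 else if x = 2 then 5 else if x = 4 then 1 else if x = 5 then 4 else x
def g0 : ZMod 6 → ZMod 6 := fun x =>
  if x = 1 then 4 else if x = 2 then 1 else if x = 4 then 5 else if x = 5 then 2 else x
def σ0 : Equiv.Perm (ZMod 6) := ⟨f0, g0, by decide, by decide⟩

lemma keyA : IsGraphEmbedding (CycGraph 6) σ0 := by decide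

/-- part 2 in the statement's form -/
lemma part2 (σ : Equiv.Perm (ZMod 6)) (h : IsGraphEmbedding (CycGraph 6) σ) :
    (∀ v, ((EdgeSum (CycGraph 6) σ).neighborSet v).ncard = 4) ∧
    (∀ v, ∃! w, (EdgeSum (CycGraph 6) σ)ᶜ.Adj v w) := by
  obtain ⟨h1, h2⟩ := keyB σ h
  constructor
  · intro v
    have hset : (EdgeSum (CycGraph 6) σ).neighborSet v = {w | A σ v w} := by
      ext w; exact edgeSum_adj σ v w
    rw [hset, Set.ncard_eq_toFinset_card', Set.toFinset_setOf]
    exact h1 v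
  · intro v
    obtain ⟨w, ⟨hw, hu⟩⟩ := h2 v
    refine ⟨w, ?_, ?_⟩
    · show (EdgeSum (CycGraph 6) σ)ᶜ.Adj v w
      rw [SimpleGraph.compl_adj, edgeSum_adj]; exact hw
    · intro y hy
      rw [SimpleGraph.compl_adj, edgeSum_adj] at hy
      exact hu y hy

lemma matching_perm (G : SimpleGraph (ZMod 6)) (h : ∀ v, ∃! w, Gᶜ.Adj v w) :
    ∃ m : Equiv.Perm (ZMod 6), (∀ v, m v ≠ v) ∧ m * m = 1 ∧
      (∀ v w, G.Adj v w ↔ v ≠ w ∧ w ≠ m v) := by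
  choose f hf hu using h
  have hinv : Function.Involutive f := fun v => (hu (f v) v (hf v).symm).symm
  refine ⟨hinv.toPerm, fun v => (hf v).ne', ?_, ?_⟩
  · ext v; simp [hinv v]
  · intro v w
    constructor
    · refine fun hadj => ⟨hadj.ne, fun hw => ?_⟩
      have : w = f v := hw
      exact ((hf v).2 (this ▸ hadj))
    · rintro ⟨hne, hnf⟩
      by_contra hna
      exact hnf (hu v w ((SimpleGraph.compl_adj G v w).2 ⟨hne, hna⟩))

lemma cycleType_invol (m : Equiv.Perm (ZMod 6)) (hfp : ∀ v, m v ≠ v) (h2 : m * m = 1) :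
    m.cycleType = Multiset.replicate 3 2 := by
  have hm1 : m ≠ 1 := by
    intro h; exact hfp 0 (by rw [h]; rfl)
  have horder : orderOf m = 2 := by
    haveI : Fact (Nat.Prime 2) := ⟨Nat.prime_two⟩
    exact orderOf_eq_prime (by rw [pow_two]; exact h2) hm1
  have hall : ∀ n ∈ m.cycleType, n = 2 := by
    intro n hn
    have hd : n ∣ 2 := by
      rw [← horder, ← Equiv.Perm.lcm_cycleType]
      exact Multiset.dvd_lcm hn
    have h2le : 2 ≤ n := Equiv.Perm.two_le_of_mem_cycleType hn
    exact Nat.le_antisymm (Nat.le_of_dvd (by norm_num) hd) h2le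
  have hrep : m.cycleType = Multiset.replicate (Multiset.card m.cycleType) 2 :=
    Multiset.eq_replicate_of_mem hall
  have hsum : m.cycleType.sum = 6 := by
    rw [Equiv.Perm.sum_cycleType]
    have : m.support = Finset.univ := by
      ext x; simp [Equiv.Perm.mem_support, hfp x]
    rw [this]; simp
  rw [hrep] at hsum ⊢
  rw [Multiset.sum_replicate, smul_eq_mul] at hsum
  have : Multiset.card m.cycleType = 3 := by omega
  rw [this]


/-- `C₆` is embeddable; for every embedding `σ` the graph `C₆ ⊕ σ(C₆)` is `4`-regular and
its complement is a perfect matching; hence any two such graphs are isomorphic and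
`C₆` is uniquely embeddable. -/
theorem c6_uniquely_embeddable :
    (∃ σ : Equiv.Perm (ZMod 6), IsGraphEmbedding (CycGraph 6) σ) ∧
    (∀ σ : Equiv.Perm (ZMod 6), IsGraphEmbedding (CycGraph 6) σ →
      (∀ v, ((EdgeSum (CycGraph 6) σ).neighborSet v).ncard = 4) ∧
      (∀ v, ∃! w, (EdgeSum (CycGraph 6) σ)ᶜ.Adj v w)) ∧
    (∀ σ₁ σ₂ : Equiv.Perm (ZMod 6),
      IsGraphEmbedding (CycGraph 6) σ₁ → IsGraphEmbedding (CycGraph 6) σ₂ →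
      Nonempty (EdgeSum (CycGraph 6) σ₁ ≃g EdgeSum (CycGraph 6) σ₂)) := by
  refine ⟨⟨σ0, keyA⟩, part2, ?_⟩
  intro σ₁ σ₂ h1 h2
  obtain ⟨m₁, hfp₁, hsq₁, hadj₁⟩ := matching_perm _ (part2 σ₁ h1).2
  obtain ⟨m₂, hfp₂, hsq₂, hadj₂⟩ := matching_perm _ (part2 σ₂ h2).2
  have hconj : IsConj m₁ m₂ := by
    rw [Equiv.Perm.isConj_iff_cycleType_eq,
      cycleType_invol m₁ hfp₁ hsq₁, cycleType_invol m₂ hfp₂ hsq₂]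
  obtain ⟨π, hπ⟩ := isConj_iff.1 hconj
  have hcomm : ∀ x, π (m₁ x) = m₂ (π x) := by
    intro x
    have : π * m₁ = m₂ * π := by
      rw [← hπ]; group
    calc π (m₁ x) = (π * m₁) x := rfl
      _ = (m₂ * π) x := by rw [this]
      _ = m₂ (π x) := rfl
  refine ⟨⟨π, ?_⟩⟩
  intro a b
  rw [hadj₁, hadj₂, ← hcomm]
  simp only [ne_eq, EmbeddingLike.apply_eq_iff_eq]
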